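/- arXiv:2206.08126 — 6 statements merged into one kernel-verified Lean document; each statement's English description precedes it below -/
import Mathlib

section
/- Under the standing setup, the probability that the nearest-centroid rule misclassifies a sample of class 1 satisfies P(‖ω ⊙ (Z̃₁ − μ̃₁)‖₂ > ‖ω ⊙ (Z̃₁ − μ̃₂)‖₂) ≤ 4·(Σ_{l=1}^d ω_l⁴ (μ̃_{1,l} − μ̃_{2,l})² σ̃_{1,l}²) / (Σ_{l=1}^d ω_l² (μ̃_{1,l} − μ̃_{2,l})²)². -/
open MeasureTheory ProbabilityTheory Finset

private lemma l2_mul_integrable {Ω : Type*} [MeasurableSpace Ω] {P : Measure Ω}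
    [IsProbabilityMeasure P] {f g : Ω → ℝ} (hf : MemLp f 2 P) (hg : MemLp g 2 P) :
    Integrable (fun ω => f ω * g ω) P := by
  refine Integrable.mono' (((hf.integrable_sq.add hg.integrable_sq)).div_const 2)
    (hf.1.mul hg.1) ?_
  filter_upwards with ω
  simp only [Pi.add_apply]
  rw [Real.norm_eq_abs, abs_mul]
  nlinarith [sq_nonneg (|f ω| - |g ω|), abs_nonneg (f ω), abs_nonneg (g ω),
    sq_abs (f ω), sq_abs (g ω)]

set_option maxHeartbeats 1000000 in
/-- First Cantelli step in the proof of Proposition 3.1: the probability that the weighted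
nearest-centroid rule misclassifies a sample of class 1 is bounded by
`4 ∑ ω⁴ (μ̃₁-μ̃₂)² σ̃₁² / (∑ ω² (μ̃₁-μ̃₂)²)²`. -/
theorem stmt3 {Ω : Type*} [MeasurableSpace Ω] (P : Measure Ω) [IsProbabilityMeasure P]
    (d : ℕ) (hd : 1 ≤ d) (Z1 Z2 : Ω → Fin d → ℝ)
    (hZ1nn : ∀ᵐ ω ∂P, ∀ l, 0 ≤ Z1 ω l) (hZ2nn : ∀ᵐ ω ∂P, ∀ l, 0 ≤ Z2 ω l)
    (hZ1L2 : ∀ l, MemLp (fun ω => Z1 ω l) 2 P)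
    (hZ2L2 : ∀ l, MemLp (fun ω => Z2 ω l) 2 P)
    (μ1 μ2 σ1 σ2 : Fin d → ℝ)
    (hμ1 : ∀ l, μ1 l = ∫ ω, Z1 ω l ∂P) (hμ2 : ∀ l, μ2 l = ∫ ω, Z2 ω l ∂P)
    (hσ1 : ∀ l, σ1 l = Real.sqrt (variance (fun ω => Z1 ω l) P))
    (hσ2 : ∀ l, σ2 l = Real.sqrt (variance (fun ω => Z2 ω l) P))
    (huncorr1 : ∀ l m, l ≠ m → ∫ ω, Z1 ω l * Z1 ω m ∂P = μ1 l * μ1 m)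
    (huncorr2 : ∀ l m, l ≠ m → ∫ ω, Z2 ω l * Z2 ω m ∂P = μ2 l * μ2 m)
    (hμne : ∀ l, μ1 l ≠ μ2 l)
    (ωo : Fin d → ℝ) (hωo : ∀ l, ωo l = (μ1 l + μ2 l) / 2)
    (μt1 μt2 σt1 σt2 : Fin d → ℝ)
    (hμt1 : ∀ l, μt1 l = μ1 l / ωo l) (hμt2 : ∀ l, μt2 l = μ2 l / ωo l)
    (hσt1 : ∀ l, σt1 l = σ1 l / ωo l) (hσt2 : ∀ l, σt2 l = σ2 l / ωo l)
    (w : Fin d → ℝ) (hw : ∀ l, 0 ≤ w l) (hwne : w ≠ 0) :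
    (P {ω | Real.sqrt (∑ l, (w l * (Z1 ω l / ωo l - μt2 l)) ^ 2) <
            Real.sqrt (∑ l, (w l * (Z1 ω l / ωo l - μt1 l)) ^ 2)}).toReal ≤
      4 * (∑ l, (w l) ^ 4 * (μt1 l - μt2 l) ^ 2 * (σt1 l) ^ 2) /
        (∑ l, (w l) ^ 2 * (μt1 l - μt2 l) ^ 2) ^ 2 := by
  -- positivity of ωo
  have hμ1nn : ∀ l, 0 ≤ μ1 l := by
    intro l; rw [hμ1 l]
    apply integral_nonneg_of_ae
    filter_upwards [hZ1nn] with ω h using h l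
  have hμ2nn : ∀ l, 0 ≤ μ2 l := by
    intro l; rw [hμ2 l]
    apply integral_nonneg_of_ae
    filter_upwards [hZ2nn] with ω h using h l
  have hωopos : ∀ l, 0 < ωo l := by
    intro l
    rw [hωo l]
    rcases (hμ1nn l).lt_or_eq with h | h
    · linarith [hμ2nn l]
    · have : μ2 l ≠ 0 := fun h2 => hμne l (h2 ▸ h.symm)
      have := (hμ2nn l).lt_of_ne (Ne.symm this)
      linarith
  have hωone : ∀ l, ωo l ≠ 0 := fun l => (hωopos l).ne'
  -- μt1 + μt2 = 2
  have hsum2 : ∀ l, μt1 l + μt2 l = 2 := by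
    intro l
    rw [hμt1 l, hμt2 l, ← add_div, hωo l]
    have h12 : μ1 l + μ2 l ≠ 0 := by
      have := hωone l; rw [hωo l] at this; intro h; exact this (by rw [h]; norm_num)
    field_simp
  have hμtne : ∀ l, μt1 l - μt2 l ≠ 0 := by
    intro l
    rw [hμt1 l, hμt2 l, div_sub_div_same]
    exact div_ne_zero (sub_ne_zero.2 (hμne l)) (hωone l)
  -- definitions
  set a : Fin d → ℝ := fun l => w l ^ 2 * (μt2 l - μt1 l) with ha
  set T : Ω → ℝ := fun ω => ∑ l, a l * (Z1 ω l / ωo l - 1) with hT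
  set s : ℝ := ∑ l, w l ^ 2 * (μt1 l - μt2 l) ^ 2 with hs
  -- basic L² facts
  have hZt : ∀ l, MemLp (fun ω => Z1 ω l / ωo l) 2 P := by
    intro l
    have := (hZ1L2 l).const_mul (ωo l)⁻¹
    simpa [div_eq_mul_inv, mul_comm] using this
  have hfLp : ∀ l : Fin d, MemLp (fun ω => a l * (Z1 ω l / ωo l - 1)) 2 P := fun l =>
    ((hZt l).sub (memLp_const 1)).const_mul (a l)
  have hTLp : MemLp T 2 P := by
    have := memLp_finset_sum (univ : Finset (Fin d)) (fun l (_ : l ∈ univ) => hfLp l)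
    simpa [hT] using this
  -- expectation per coordinate
  have hμtint : ∀ l, ∫ ω, Z1 ω l / ωo l ∂P = μt1 l := by
    intro l
    rw [hμt1 l, hμ1 l, MeasureTheory.integral_div]
  have hETl : ∀ l, ∫ ω, a l * (Z1 ω l / ωo l - 1) ∂P = a l * (μt1 l - 1) := by
    intro l
    rw [integral_const_mul, integral_sub ((hZt l).integrable one_le_two) (integrable_const 1),
      hμtint l, integral_const]
    simp
  have hET : P[T] = -s / 2 := by
    have h0 : P[T] = ∑ l, a l * (μt1 l - 1) := by
      rw [hT, integral_finset_sum _ (fun l _ => (hfLp l).integrable one_le_two)]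
      exact Finset.sum_congr rfl fun l _ => hETl l
    rw [h0]
    have hterm : ∀ l : Fin d, a l * (μt1 l - 1) = -(w l ^ 2 * (μt1 l - μt2 l) ^ 2) / 2 := by
      intro l
      have h2 := hsum2 l
      simp only [ha]
      linear_combination (-(w l ^ 2 * (μt1 l - μt2 l)) / 2) * h2
    rw [Finset.sum_congr rfl fun l _ => hterm l, ← Finset.sum_div, ← Finset.sum_neg_distrib]
  -- second moments
  have hM : ∀ l, ∫ ω, Z1 ω l * Z1 ω l ∂P = variance (fun ω => Z1 ω l) P + μ1 l ^ 2 := by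
    intro l
    rw [variance_eq_sub (hZ1L2 l), ← hμ1 l]
    have heq : (fun ω => Z1 ω l * Z1 ω l) = ((fun ω => Z1 ω l) ^ 2) := by
      funext ω; simp [sq]
    rw [heq]; ring
  -- integral of products of centered-ish terms
  have hpair : ∀ l m : Fin d,
      ∫ ω, (a l * (Z1 ω l / ωo l - 1)) * (a m * (Z1 ω m / ωo m - 1)) ∂P
        = a l * a m * ((∫ ω, Z1 ω l * Z1 ω m ∂P) / (ωo l * ωo m) - μt1 l - μt1 m + 1) := by
    intro l m
    have heq : (fun ω => (a l * (Z1 ω l / ωo l - 1)) * (a m * (Z1 ω m / ωo m - 1)))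
        = fun ω => ((a l * a m / (ωo l * ωo m)) * (Z1 ω l * Z1 ω m)
            + (-(a l * a m / ωo l)) * Z1 ω l)
            + ((-(a l * a m / ωo m)) * Z1 ω m + (a l * a m)) := by
      funext ω
      field_simp
      ring
    have i1 : Integrable (fun ω => (a l * a m / (ωo l * ωo m)) * (Z1 ω l * Z1 ω m)) P :=
      (l2_mul_integrable (hZ1L2 l) (hZ1L2 m)).const_mul _
    have i2 : Integrable (fun ω => (-(a l * a m / ωo l)) * Z1 ω l) P :=
      ((hZ1L2 l).integrable one_le_two).const_mul _
    have i3 : Integrable (fun ω => (-(a l * a m / ωo m)) * Z1 ω m) P :=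
      ((hZ1L2 m).integrable one_le_two).const_mul _
    have i12 : Integrable (fun ω => (a l * a m / (ωo l * ωo m)) * (Z1 ω l * Z1 ω m)
        + (-(a l * a m / ωo l)) * Z1 ω l) P := i1.add i2
    have i34 : Integrable (fun ω => (-(a l * a m / ωo m)) * Z1 ω m + (a l * a m)) P :=
      i3.add (integrable_const (a l * a m))
    rw [heq]
    rw [integral_add i12 i34]
    simp only [integral_add i1 i2, integral_add i3 (integrable_const (a l * a m)),
      integral_const_mul, integral_const, measure_univ, ENNReal.toReal_one, smul_eq_mul,
      one_mul, one_smul, ← hμ1 l, ← hμ1 m]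
    have hfold : w m ^ 2 * (μt2 m - μt1 m) = a m := rfl
    rw [probReal_univ, hμt1 l, hμt1 m]
    ring
  -- variance of T
  have hVar : variance T P = ∑ l, a l ^ 2 * (variance (fun ω => Z1 ω l) P / ωo l ^ 2) := by
    rw [variance_eq_sub hTLp]
    have hTsq : (T ^ 2) = fun ω =>
        ∑ l, ∑ m, (a l * (Z1 ω l / ωo l - 1)) * (a m * (Z1 ω m / ωo m - 1)) := by
      funext ω
      simp only [Pi.pow_apply, hT]
      rw [sq, Finset.sum_mul_sum]
    have h1 : P[T ^ 2] = ∑ l, ∑ m,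
        a l * a m * ((∫ ω, Z1 ω l * Z1 ω m ∂P) / (ωo l * ωo m) - μt1 l - μt1 m + 1) := by
      rw [hTsq, integral_finset_sum _ (fun l _ =>
        integrable_finset_sum _ (fun m _ => l2_mul_integrable (hfLp l) (hfLp m)))]
      refine Finset.sum_congr rfl fun l _ => ?_
      rw [integral_finset_sum _ (fun m _ => l2_mul_integrable (hfLp l) (hfLp m))]
      exact Finset.sum_congr rfl fun m _ => hpair l m
    have h2 : P[T] ^ 2 = ∑ l, ∑ m, (a l * (μt1 l - 1)) * (a m * (μt1 m - 1)) := by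
      have h0 : P[T] = ∑ l, a l * (μt1 l - 1) := by
        rw [hT, integral_finset_sum _ (fun l _ => (hfLp l).integrable one_le_two)]
        exact Finset.sum_congr rfl fun l _ => hETl l
      rw [h0, sq, Finset.sum_mul_sum]
    rw [h1, h2, ← Finset.sum_sub_distrib]
    refine Finset.sum_congr rfl fun l _ => ?_
    rw [← Finset.sum_sub_distrib]
    rw [Finset.sum_eq_single_of_mem l (Finset.mem_univ l)]
    · rw [hM l]
      have hμ1t : μ1 l = μt1 l * ωo l := by
        rw [hμt1 l, div_mul_cancel₀ _ (hωone l)]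
      have hkey : (variance (fun ω => Z1 ω l) P + (μt1 l * ωo l) ^ 2) / (ωo l * ωo l)
          = variance (fun ω => Z1 ω l) P / ωo l ^ 2 + μt1 l ^ 2 := by
        field_simp [hωone l]
      rw [hμ1t, hkey]
      ring
    · intro m _ hml
      rw [huncorr1 l m (Ne.symm hml)]
      have hμ1tl : μ1 l = μt1 l * ωo l := by
        rw [hμt1 l, div_mul_cancel₀ _ (hωone l)]
      have hμ1tm : μ1 m = μt1 m * ωo m := by
        rw [hμt1 m, div_mul_cancel₀ _ (hωone m)]
      have hkey : μt1 l * ωo l * (μt1 m * ωo m) / (ωo l * ωo m) = μt1 l * μt1 m := by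
        field_simp [hωone l, hωone m]
      rw [hμ1tl, hμ1tm, hkey]
      ring
  -- positivity of s
  have hspos : 0 < s := by
    obtain ⟨l0, hl0⟩ := Function.ne_iff.1 hwne
    refine Finset.sum_pos' (fun l _ => by positivity) ⟨l0, Finset.mem_univ l0, ?_⟩
    have hwl : 0 < w l0 := (hw l0).lt_of_ne (Ne.symm hl0)
    have := hμtne l0
    positivity
  -- event inclusion
  have hsub : {ω | Real.sqrt (∑ l, (w l * (Z1 ω l / ωo l - μt2 l)) ^ 2) <
            Real.sqrt (∑ l, (w l * (Z1 ω l / ωo l - μt1 l)) ^ 2)} ⊆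
      {ω | s / 2 ≤ |T ω - P[T]|} := by
    intro ω hω
    simp only [Set.mem_setOf_eq] at hω ⊢
    have h1 : (∑ l, (w l * (Z1 ω l / ωo l - μt2 l)) ^ 2) <
        ∑ l, (w l * (Z1 ω l / ωo l - μt1 l)) ^ 2 := by
      by_contra h
      push_neg at h
      exact absurd hω (not_lt.2 (Real.sqrt_le_sqrt h))
    have hTexp : 2 * T ω = (∑ l, (w l * (Z1 ω l / ωo l - μt1 l)) ^ 2)
        - ∑ l, (w l * (Z1 ω l / ωo l - μt2 l)) ^ 2 := by
      rw [hT, Finset.mul_sum, ← Finset.sum_sub_distrib]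
      refine Finset.sum_congr rfl fun l _ => ?_
      have h2 := hsum2 l
      simp only [ha]
      linear_combination (w l ^ 2 * (μt2 l - μt1 l)) * h2
    have hTpos : 0 < T ω := by linarith
    rw [hET]
    have := le_abs_self (T ω - -s / 2)
    have : T ω - -s / 2 = T ω + s / 2 := by ring
    calc s / 2 ≤ T ω + s / 2 := by linarith
      _ = T ω - -s / 2 := by ring
      _ ≤ |T ω - -s / 2| := le_abs_self _
  -- conclude via Chebyshev
  have hcheb := meas_ge_le_variance_div_sq (μ := P) hTLp (c := s / 2) (by linarith)
  have hvform : variance T P / (s / 2) ^ 2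
      = 4 * (∑ l, w l ^ 4 * (μt1 l - μt2 l) ^ 2 * σt1 l ^ 2) / s ^ 2 := by
    rw [hVar]
    have : ∀ l : Fin d, a l ^ 2 * (variance (fun ω => Z1 ω l) P / ωo l ^ 2)
        = w l ^ 4 * (μt1 l - μt2 l) ^ 2 * σt1 l ^ 2 := by
      intro l
      have hσ : σt1 l ^ 2 = variance (fun ω => Z1 ω l) P / ωo l ^ 2 := by
        rw [hσt1 l, hσ1 l, div_pow, Real.sq_sqrt (variance_nonneg _ _)]
      rw [hσ]
      simp only [ha]
      field_simp
      ring
    rw [Finset.sum_congr rfl (fun l _ => this l)]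
    rw [div_eq_div_iff (by positivity) (by positivity)]
    ring
  calc (P {ω | Real.sqrt (∑ l, (w l * (Z1 ω l / ωo l - μt2 l)) ^ 2) <
            Real.sqrt (∑ l, (w l * (Z1 ω l / ωo l - μt1 l)) ^ 2)}).toReal
      ≤ (P {ω | s / 2 ≤ |T ω - P[T]|}).toReal :=
        ENNReal.toReal_mono (measure_ne_top _ _) (measure_mono hsub)
    _ ≤ (ENNReal.ofReal (variance T P / (s / 2) ^ 2)).toReal :=
        ENNReal.toReal_mono ENNReal.ofReal_ne_top hcheb
    _ = variance T P / (s / 2) ^ 2 :=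
        ENNReal.toReal_ofReal (div_nonneg (variance_nonneg _ _) (by positivity))
    _ = 4 * (∑ l, w l ^ 4 * (μt1 l - μt2 l) ^ 2 * σt1 l ^ 2) / s ^ 2 := hvform
end

section
/- Under the standing setup, define the expected misclassification rate of the weighted nearest-centroid classifier as R = (1/2)·[ P(‖ω ⊙ (Z̃₁ − μ̃₁)‖₂ > ‖ω ⊙ (Z̃₁ − μ̃₂)‖₂) + P(‖ω ⊙ (Z̃₂ − μ̃₂)‖₂ > ‖ω ⊙ (Z̃₂ − μ̃₁)‖₂) ]. Then R ≤ 2·(Σ_{l=1}^d ω_l⁴ (μ̃_{1,l} − μ̃_{2,l})² (σ̃_{1,l}² + σ̃_{2,l}²)) / (Σ_{l=1}^d ω_l² (μ̃_{1,l} − μ̃_{2,l})²)². -/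
open MeasureTheory ProbabilityTheory Finset

private lemma int_mul_L2 {Ω : Type*} [MeasurableSpace Ω] {P : Measure Ω}
    {f g : Ω → ℝ} (hf : MemLp f 2 P) (hg : MemLp g 2 P) :
    Integrable (fun ω => f ω * g ω) P := by
  refine Integrable.mono' (((hf.integrable_sq.add hg.integrable_sq)).div_const 2)
    (hf.1.mul hg.1) ?_
  filter_upwards with ω
  rw [Real.norm_eq_abs, abs_mul]
  simp only [Pi.add_apply]
  nlinarith [sq_nonneg (|f ω| - |g ω|), sq_abs (f ω), sq_abs (g ω), abs_nonneg (f ω),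
    abs_nonneg (g ω), sq_nonneg (f ω ^ 2 + g ω ^ 2)]

private lemma variance_linear {Ω : Type*} [MeasurableSpace Ω] (P : Measure Ω)
    [IsProbabilityMeasure P] {d : ℕ} (X : Ω → Fin d → ℝ)
    (hL2 : ∀ l, MemLp (fun ω => X ω l) 2 P) (μ : Fin d → ℝ)
    (hμ : ∀ l, μ l = ∫ ω, X ω l ∂P)
    (hunc : ∀ l m, l ≠ m → ∫ ω, X ω l * X ω m ∂P = μ l * μ m)
    (a : Fin d → ℝ) :
    variance (fun ω => ∑ l, a l * X ω l) P
      = ∑ l, (a l) ^ 2 * variance (fun ω => X ω l) P := by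
  have hSL2 : MemLp (fun ω => ∑ l, a l * X ω l) 2 P := by
    have h := memLp_finset_sum' (μ := P) (univ : Finset (Fin d))
      (f := fun l ω => a l * X ω l) (fun l _ => (hL2 l).const_mul _)
    have he : (∑ x : Fin d, fun ω => a x * X ω x) = fun ω => ∑ l, a l * X ω l := by
      funext ω; simp
    rwa [he] at h
  have hint : ∀ l m : Fin d, Integrable (fun ω => (a l * X ω l) * (a m * X ω m)) P := by
    intro l m
    exact int_mul_L2 ((hL2 l).const_mul _) ((hL2 m).const_mul _)
  have h1 : ∫ ω, (∑ l, a l * X ω l) ^ 2 ∂P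
      = ∑ l, ∑ m, a l * a m * ∫ ω, X ω l * X ω m ∂P := by
    have : ∀ ω : Ω, (∑ l, a l * X ω l) ^ 2
        = ∑ l, ∑ m, (a l * X ω l) * (a m * X ω m) := by
      intro ω; rw [sq, Finset.sum_mul_sum]
    simp_rw [this]
    rw [integral_finset_sum _ fun l _ => integrable_finset_sum _ fun m _ => hint l m]
    refine Finset.sum_congr rfl fun l _ => ?_
    rw [integral_finset_sum _ fun m _ => hint l m]
    refine Finset.sum_congr rfl fun m _ => ?_
    rw [← integral_const_mul]
    congr 1; funext ω; ring
  have h2 : ∫ ω, (∑ l, a l * X ω l) ∂P = ∑ l, a l * μ l := by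
    rw [integral_finset_sum _ fun l _ => ((hL2 l).integrable one_le_two).const_mul _]
    exact Finset.sum_congr rfl fun l _ => by rw [integral_const_mul, ← hμ]
  have hvd := variance_eq_sub hSL2
  simp only [Pi.pow_apply] at hvd
  rw [hvd, h1, h2]
  have h3 : (∑ l, a l * μ l) ^ 2 = ∑ l, ∑ m, a l * a m * (μ l * μ m) := by
    rw [sq, Finset.sum_mul_sum]
    exact Finset.sum_congr rfl fun l _ => Finset.sum_congr rfl fun m _ => by ring
  rw [h3, ← Finset.sum_sub_distrib]
  refine Finset.sum_congr rfl fun l _ => ?_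
  rw [← Finset.sum_sub_distrib, Finset.sum_eq_single l]
  · have hvl := variance_eq_sub (hL2 l)
    simp only [Pi.pow_apply] at hvl
    rw [hvl, ← hμ l]
    have : ∫ ω, X ω l * X ω l ∂P = ∫ ω, X ω l ^ 2 ∂P := by
      congr 1; funext ω; ring
    rw [this]
    ring
  · intro m _ hm
    rw [hunc l m (Ne.symm hm)]
    ring
  · intro h; exact absurd (Finset.mem_univ l) h

private lemma class_bound {Ω : Type*} [MeasurableSpace Ω] (P : Measure Ω)
    [IsProbabilityMeasure P] {d : ℕ} (X : Ω → Fin d → ℝ)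
    (hL2 : ∀ l, MemLp (fun ω => X ω l) 2 P) (μa μb : Fin d → ℝ)
    (hμ : ∀ l, μa l = ∫ ω, X ω l ∂P)
    (hunc : ∀ l m, l ≠ m → ∫ ω, X ω l * X ω m ∂P = μa l * μa m)
    (w : Fin d → ℝ) {D : ℝ} (hD : D = ∑ l, w l ^ 2 * (μa l - μb l) ^ 2) (hDpos : 0 < D) :
    (P {ω | Real.sqrt (∑ l, (w l * (X ω l - μb l)) ^ 2) <
            Real.sqrt (∑ l, (w l * (X ω l - μa l)) ^ 2)}).toReal ≤
      4 * (∑ l, w l ^ 4 * (μa l - μb l) ^ 2 * variance (fun ω => X ω l) P) / D ^ 2 := by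
  classical
  set a : Fin d → ℝ := fun l => w l ^ 2 * (μa l - μb l) with ha
  set S : Ω → ℝ := fun ω => ∑ l, a l * X ω l with hS
  have hSL2 : MemLp S 2 P := by
    have h := memLp_finset_sum' (μ := P) (univ : Finset (Fin d))
      (f := fun l ω => a l * X ω l) (fun l _ => (hL2 l).const_mul _)
    have he : (∑ x : Fin d, fun ω => a x * X ω x) = S := by funext ω; simp [hS]
    rwa [he] at h
  have hES : ∫ ω, S ω ∂P = ∑ l, a l * μa l := by
    rw [hS]
    rw [integral_finset_sum _ fun l _ => ((hL2 l).integrable one_le_two).const_mul _]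
    exact Finset.sum_congr rfl fun l _ => by rw [integral_const_mul, ← hμ]
  have hvar : variance S P = ∑ l, (a l) ^ 2 * variance (fun ω => X ω l) P :=
    variance_linear P X hL2 μa hμ hunc a
  have hmc : ∑ l, a l * μa l = (∑ l, w l ^ 2 * (μa l ^ 2 - μb l ^ 2)) / 2 + D / 2 := by
    rw [hD, Finset.sum_div, Finset.sum_div, ← Finset.sum_add_distrib]
    exact Finset.sum_congr rfl fun l _ => by rw [ha]; ring
  have hsub : {ω | Real.sqrt (∑ l, (w l * (X ω l - μb l)) ^ 2) <
            Real.sqrt (∑ l, (w l * (X ω l - μa l)) ^ 2)}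
      ⊆ {ω | D / 2 ≤ |S ω - ∫ ω, S ω ∂P|} := by
    intro ω hω
    simp only [Set.mem_setOf_eq] at hω ⊢
    have hAB : ∑ l, (w l * (X ω l - μb l)) ^ 2 < ∑ l, (w l * (X ω l - μa l)) ^ 2 := by
      by_contra h
      exact absurd (Real.sqrt_le_sqrt (not_lt.1 h)) (not_le.2 hω)
    have expand : ∑ l, (w l * (X ω l - μa l)) ^ 2 - ∑ l, (w l * (X ω l - μb l)) ^ 2
        = -2 * S ω + ∑ l, w l ^ 2 * (μa l ^ 2 - μb l ^ 2) := by
      rw [hS, Finset.mul_sum, ← Finset.sum_add_distrib, ← Finset.sum_sub_distrib]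
      exact Finset.sum_congr rfl fun l _ => by rw [ha]; ring
    have hSlt : S ω - ∫ ω, S ω ∂P < -(D / 2) := by
      rw [hES, hmc]; linarith
    rw [le_abs]
    right; linarith
  have cheb := meas_ge_le_variance_div_sq (μ := P) hSL2 (c := D / 2) (by linarith)
  have hle : P {ω | Real.sqrt (∑ l, (w l * (X ω l - μb l)) ^ 2) <
            Real.sqrt (∑ l, (w l * (X ω l - μa l)) ^ 2)}
      ≤ ENNReal.ofReal (variance S P / (D / 2) ^ 2) :=
    (measure_mono hsub).trans cheb
  have h1 : (P {ω | Real.sqrt (∑ l, (w l * (X ω l - μb l)) ^ 2) <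
            Real.sqrt (∑ l, (w l * (X ω l - μa l)) ^ 2)}).toReal
      ≤ variance S P / (D / 2) ^ 2 := by
    have := ENNReal.toReal_mono ENNReal.ofReal_ne_top hle
    rwa [ENNReal.toReal_ofReal (div_nonneg (variance_nonneg _ _) (by positivity))] at this
  refine h1.trans (le_of_eq ?_)
  rw [hvar]
  have hsum : ∑ l, (a l) ^ 2 * variance (fun ω => X ω l) P
      = ∑ l, w l ^ 4 * (μa l - μb l) ^ 2 * variance (fun ω => X ω l) P :=
    Finset.sum_congr rfl fun l _ => by rw [ha]; ring
  rw [hsum]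
  have hD0 : (D : ℝ) ≠ 0 := ne_of_gt hDpos
  field_simp
  ring
/-- The first (sharper) inequality in the proof chain of Proposition 3.1: the expected
misclassification rate `R` of the weighted nearest-centroid classifier satisfies
`R ≤ 2 ∑ ω⁴ (μ̃₁-μ̃₂)² (σ̃₁²+σ̃₂²) / (∑ ω² (μ̃₁-μ̃₂)²)²`. -/
theorem stmt4 {Ω : Type*} [MeasurableSpace Ω] (P : Measure Ω) [IsProbabilityMeasure P]
    (d : ℕ) (hd : 1 ≤ d) (Z1 Z2 : Ω → Fin d → ℝ)
    (hZ1nn : ∀ᵐ ω ∂P, ∀ l, 0 ≤ Z1 ω l) (hZ2nn : ∀ᵐ ω ∂P, ∀ l, 0 ≤ Z2 ω l)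
    (hZ1L2 : ∀ l, MemLp (fun ω => Z1 ω l) 2 P)
    (hZ2L2 : ∀ l, MemLp (fun ω => Z2 ω l) 2 P)
    (μ1 μ2 σ1 σ2 : Fin d → ℝ)
    (hμ1 : ∀ l, μ1 l = ∫ ω, Z1 ω l ∂P) (hμ2 : ∀ l, μ2 l = ∫ ω, Z2 ω l ∂P)
    (hσ1 : ∀ l, σ1 l = Real.sqrt (variance (fun ω => Z1 ω l) P))
    (hσ2 : ∀ l, σ2 l = Real.sqrt (variance (fun ω => Z2 ω l) P))
    (huncorr1 : ∀ l m, l ≠ m → ∫ ω, Z1 ω l * Z1 ω m ∂P = μ1 l * μ1 m)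
    (huncorr2 : ∀ l m, l ≠ m → ∫ ω, Z2 ω l * Z2 ω m ∂P = μ2 l * μ2 m)
    (hμne : ∀ l, μ1 l ≠ μ2 l)
    (ωo : Fin d → ℝ) (hωo : ∀ l, ωo l = (μ1 l + μ2 l) / 2)
    (μt1 μt2 σt1 σt2 : Fin d → ℝ)
    (hμt1 : ∀ l, μt1 l = μ1 l / ωo l) (hμt2 : ∀ l, μt2 l = μ2 l / ωo l)
    (hσt1 : ∀ l, σt1 l = σ1 l / ωo l) (hσt2 : ∀ l, σt2 l = σ2 l / ωo l)
    (w : Fin d → ℝ) (hw : ∀ l, 0 ≤ w l) (hwne : w ≠ 0)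
    (R : ℝ)
    (hR : R = (1 / 2) *
      ((P {ω | Real.sqrt (∑ l, (w l * (Z1 ω l / ωo l - μt2 l)) ^ 2) <
               Real.sqrt (∑ l, (w l * (Z1 ω l / ωo l - μt1 l)) ^ 2)}).toReal +
       (P {ω | Real.sqrt (∑ l, (w l * (Z2 ω l / ωo l - μt1 l)) ^ 2) <
               Real.sqrt (∑ l, (w l * (Z2 ω l / ωo l - μt2 l)) ^ 2)}).toReal)) :
    R ≤ 2 * (∑ l, (w l) ^ 4 * (μt1 l - μt2 l) ^ 2 * ((σt1 l) ^ 2 + (σt2 l) ^ 2)) /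
        (∑ l, (w l) ^ 2 * (μt1 l - μt2 l) ^ 2) ^ 2 := by
  classical
  have hμ1nn : ∀ l, 0 ≤ μ1 l := fun l => by
    rw [hμ1]; exact integral_nonneg_of_ae (hZ1nn.mono fun ω h => h l)
  have hμ2nn : ∀ l, 0 ≤ μ2 l := fun l => by
    rw [hμ2]; exact integral_nonneg_of_ae (hZ2nn.mono fun ω h => h l)
  have hωopos : ∀ l, 0 < ωo l := by
    intro l
    rw [hωo]
    have h1 := hμ1nn l; have h2 := hμ2nn l; have h3 := hμne l
    rcases lt_or_eq_of_le h1 with h | h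
    · linarith
    · rcases lt_or_eq_of_le h2 with h' | h'
      · linarith
      · exact absurd (h.symm.trans h') h3
  have hΔ : ∀ l, μt1 l - μt2 l ≠ 0 := by
    intro l
    rw [hμt1, hμt2, div_sub_div_same]
    exact div_ne_zero (sub_ne_zero.2 (hμne l)) (ne_of_gt (hωopos l))
  set D : ℝ := ∑ l, w l ^ 2 * (μt1 l - μt2 l) ^ 2 with hDdef
  have hsqpos : ∀ x : ℝ, x ≠ 0 → 0 < x ^ 2 := by
    intro x hx
    have := abs_pos.2 hx
    nlinarith [sq_abs x]
  have hDpos : 0 < D := by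
    obtain ⟨l0, hl0⟩ := Function.ne_iff.1 hwne
    rw [hDdef]
    refine Finset.sum_pos' (fun l _ => by positivity) ⟨l0, Finset.mem_univ _, ?_⟩
    exact mul_pos (hsqpos _ (by simpa using hl0)) (hsqpos _ (hΔ l0))
  have hD0 : D ≠ 0 := ne_of_gt hDpos
  -- class 1 data
  have hXL2_1 : ∀ l, MemLp (fun ω => Z1 ω l / ωo l) 2 P := fun l => by
    simpa [div_eq_inv_mul] using (hZ1L2 l).const_mul (ωo l)⁻¹
  have hmean1 : ∀ l, μt1 l = ∫ ω, Z1 ω l / ωo l ∂P := fun l => by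
    rw [hμt1, hμ1, integral_div]
  have hunc1' : ∀ l m, l ≠ m →
      ∫ ω, (Z1 ω l / ωo l) * (Z1 ω m / ωo m) ∂P = μt1 l * μt1 m := by
    intro l m hlm
    simp_rw [div_mul_div_comm]
    rw [integral_div, huncorr1 l m hlm, hμt1, hμt1, div_mul_div_comm]
  have hv1 : ∀ l, variance (fun ω => Z1 ω l / ωo l) P = σt1 l ^ 2 := by
    intro l
    have he : (fun ω => Z1 ω l / ωo l) = fun ω => (ωo l)⁻¹ * Z1 ω l := by
      funext ω; rw [div_eq_inv_mul]
    rw [he, variance_const_mul, hσt1, hσ1, div_pow, Real.sq_sqrt (variance_nonneg _ _),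
      inv_pow, inv_mul_eq_div]
  -- class 2 data
  have hXL2_2 : ∀ l, MemLp (fun ω => Z2 ω l / ωo l) 2 P := fun l => by
    simpa [div_eq_inv_mul] using (hZ2L2 l).const_mul (ωo l)⁻¹
  have hmean2 : ∀ l, μt2 l = ∫ ω, Z2 ω l / ωo l ∂P := fun l => by
    rw [hμt2, hμ2, integral_div]
  have hunc2' : ∀ l m, l ≠ m →
      ∫ ω, (Z2 ω l / ωo l) * (Z2 ω m / ωo m) ∂P = μt2 l * μt2 m := by
    intro l m hlm
    simp_rw [div_mul_div_comm]
    rw [integral_div, huncorr2 l m hlm, hμt2, hμt2, div_mul_div_comm]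
  have hv2 : ∀ l, variance (fun ω => Z2 ω l / ωo l) P = σt2 l ^ 2 := by
    intro l
    have he : (fun ω => Z2 ω l / ωo l) = fun ω => (ωo l)⁻¹ * Z2 ω l := by
      funext ω; rw [div_eq_inv_mul]
    rw [he, variance_const_mul, hσt2, hσ2, div_pow, Real.sq_sqrt (variance_nonneg _ _),
      inv_pow, inv_mul_eq_div]
  -- apply the per-class Chebyshev bound
  have h1 : (P {ω | Real.sqrt (∑ l, (w l * (Z1 ω l / ωo l - μt2 l)) ^ 2) <
               Real.sqrt (∑ l, (w l * (Z1 ω l / ωo l - μt1 l)) ^ 2)}).toReal ≤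
      4 * (∑ l, w l ^ 4 * (μt1 l - μt2 l) ^ 2 *
        variance (fun ω => Z1 ω l / ωo l) P) / D ^ 2 :=
    class_bound P (fun ω l => Z1 ω l / ωo l) hXL2_1 μt1 μt2 hmean1 hunc1' w hDdef hDpos
  have hD2 : D = ∑ l, w l ^ 2 * (μt2 l - μt1 l) ^ 2 := by
    rw [hDdef]; exact Finset.sum_congr rfl fun l _ => by ring
  have h2 : (P {ω | Real.sqrt (∑ l, (w l * (Z2 ω l / ωo l - μt1 l)) ^ 2) <
               Real.sqrt (∑ l, (w l * (Z2 ω l / ωo l - μt2 l)) ^ 2)}).toReal ≤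
      4 * (∑ l, w l ^ 4 * (μt2 l - μt1 l) ^ 2 *
        variance (fun ω => Z2 ω l / ωo l) P) / D ^ 2 :=
    class_bound P (fun ω l => Z2 ω l / ωo l) hXL2_2 μt2 μt1 hmean2 hunc2' w hD2 hDpos
  have hA : ∑ l, w l ^ 4 * (μt1 l - μt2 l) ^ 2 * variance (fun ω => Z1 ω l / ωo l) P
      = ∑ l, w l ^ 4 * (μt1 l - μt2 l) ^ 2 * σt1 l ^ 2 :=
    Finset.sum_congr rfl fun l _ => by rw [hv1]
  have hB : ∑ l, w l ^ 4 * (μt2 l - μt1 l) ^ 2 * variance (fun ω => Z2 ω l / ωo l) P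
      = ∑ l, w l ^ 4 * (μt1 l - μt2 l) ^ 2 * σt2 l ^ 2 :=
    Finset.sum_congr rfl fun l _ => by rw [hv2]; ring
  rw [hA] at h1
  rw [hB] at h2
  have hsplit : ∑ l, w l ^ 4 * (μt1 l - μt2 l) ^ 2 * (σt1 l ^ 2 + σt2 l ^ 2)
      = (∑ l, w l ^ 4 * (μt1 l - μt2 l) ^ 2 * σt1 l ^ 2)
        + (∑ l, w l ^ 4 * (μt1 l - μt2 l) ^ 2 * σt2 l ^ 2) := by
    rw [← Finset.sum_add_distrib]
    exact Finset.sum_congr rfl fun l _ => by ring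
  rw [hR, hsplit]
  set A := ∑ l, w l ^ 4 * (μt1 l - μt2 l) ^ 2 * σt1 l ^ 2
  set B := ∑ l, w l ^ 4 * (μt1 l - μt2 l) ^ 2 * σt2 l ^ 2
  have key : 2 * (A + B) / D ^ 2 = 1 / 2 * (4 * A / D ^ 2 + 4 * B / D ^ 2) := by
    field_simp; ring
  rw [key]
  linarith
end

section
/- Let d ≥ 1 and let μ̃_{1,l}, μ̃_{2,l}, σ̃_{1,l}, σ̃_{2,l} (l = 1,…,d) be real numbers with μ̃_{1,l} ≠ μ̃_{2,l} and σ̃_{1,l} + σ̃_{2,l} > 0 for every l. Define U(ω) = 8·(Σ_{l=1}^d ω_l⁴ (σ̃_{1,l} + σ̃_{2,l})²) / (Σ_{l=1}^d ω_l² (μ̃_{1,l} − μ̃_{2,l})²)² for ω ∈ [0,∞)^d with ω ≠ 0. Then the minimum value of U over this domain equals 8 / (Σ_{l=1}^d (μ̃_{1,l} − μ̃_{2,l})⁴/(σ̃_{1,l} + σ̃_{2,l})²), and U(ω) attains this minimum if and only if there exists a constant c > 0 such that ω_l = c·|μ̃_{1,l} − μ̃_{2,l}|/(σ̃_{1,l}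 + σ̃_{2,l}) for every l. -/
open Finset

/-- Cauchy–Schwarz-type inequality with equality case, via completing the square. -/
lemma quad_aux {d : ℕ} (a b x : Fin d → ℝ) (hb : ∀ l, 0 < b l)
    (hS : 0 < ∑ l, a l ^ 2 / b l) :
    (∑ l, x l * a l) ^ 2 ≤ (∑ l, x l ^ 2 * b l) * (∑ l, a l ^ 2 / b l) ∧
    ((∑ l, x l * a l) ^ 2 = (∑ l, x l ^ 2 * b l) * (∑ l, a l ^ 2 / b l) ↔
      ∀ l, x l = ((∑ l, x l * a l) / (∑ l, a l ^ 2 / b l)) * a l / b l) := by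
  set S := ∑ l, a l ^ 2 / b l with hSdef
  set P := ∑ l, x l * a l with hPdef
  set Q := ∑ l, x l ^ 2 * b l with hQdef
  set t := P / S with htdef
  have hexp : ∑ l, b l * (x l - t * a l / b l) ^ 2 = Q - P ^ 2 / S := by
    have h1 : ∀ l : Fin d, b l * (x l - t * a l / b l) ^ 2
        = x l ^ 2 * b l - 2 * t * (x l * a l) + t ^ 2 * (a l ^ 2 / b l) := by
      intro l
      have hbl := (hb l).ne'
      field_simp
      ring
    calc ∑ l, b l * (x l - t * a l / b l) ^ 2
        = ∑ l, (x l ^ 2 * b l - 2 * t * (x l * a l) + t ^ 2 * (a l ^ 2 / b l)) :=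
          Finset.sum_congr rfl fun l _ => h1 l
      _ = Q - 2 * t * P + t ^ 2 * S := by
          rw [Finset.sum_add_distrib, Finset.sum_sub_distrib, ← Finset.mul_sum,
            ← Finset.mul_sum]
      _ = Q - P ^ 2 / S := by
          rw [htdef]; field_simp; ring
  have hEnn : 0 ≤ ∑ l, b l * (x l - t * a l / b l) ^ 2 :=
    Finset.sum_nonneg fun l _ => mul_nonneg (hb l).le (sq_nonneg _)
  have hIneq : P ^ 2 ≤ Q * S := by
    have h2 : P ^ 2 / S ≤ Q := by linarith [hEnn.trans_eq hexp]
    exact (div_le_iff₀ hS).mp h2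
  refine ⟨hIneq, ?_, ?_⟩
  · intro heq
    have hE0 : ∑ l, b l * (x l - t * a l / b l) ^ 2 = 0 := by
      rw [hexp, heq, mul_div_assoc, div_self hS.ne', mul_one, sub_self]
    intro l
    have h3 := (Finset.sum_eq_zero_iff_of_nonneg
      (fun l _ => mul_nonneg (hb l).le (sq_nonneg (x l - t * a l / b l)))).mp hE0 l
      (Finset.mem_univ l)
    have h4 : (x l - t * a l / b l) ^ 2 = 0 := by
      rcases mul_eq_zero.mp h3 with h | h
      · exact absurd h (hb l).ne'
      · exact h
    have h5 : x l - t * a l / b l = 0 := by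
      exact pow_eq_zero_iff (n := 2) (by norm_num) |>.mp h4
    linarith [h5]
  · intro hx
    have hP2 : P = t * S := by
      rw [hPdef, hSdef, Finset.mul_sum]
      refine Finset.sum_congr rfl fun l _ => ?_
      rw [hx l]
      have hbl := (hb l).ne'
      field_simp
    have hQ2 : Q = t ^ 2 * S := by
      rw [hQdef, hSdef, Finset.mul_sum]
      refine Finset.sum_congr rfl fun l _ => ?_
      rw [hx l]
      have hbl := (hb l).ne'
      field_simp
    rw [hP2, hQ2]; ring

/-- Optimization part of Proposition 3.1: the upper bound
`U(ω) = 8 ∑ ω⁴ (σ̃₁+σ̃₂)² / (∑ ω² (μ̃₁-μ̃₂)²)²` over the nonnegative orthant minus the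
origin attains its minimum `8 / ∑ (μ̃₁-μ̃₂)⁴/(σ̃₁+σ̃₂)²` exactly when
`ω_l = c |μ̃₁-μ̃₂| / (σ̃₁+σ̃₂)` for some `c > 0`. -/
theorem stmt6 (d : ℕ) (hd : 1 ≤ d) (m1 m2 s1 s2 : Fin d → ℝ)
    (hm : ∀ l, m1 l ≠ m2 l) (hs : ∀ l, 0 < s1 l + s2 l)
    (U : (Fin d → ℝ) → ℝ)
    (hU : ∀ w, U w = 8 * (∑ l, (w l) ^ 4 * (s1 l + s2 l) ^ 2) /
      (∑ l, (w l) ^ 2 * (m1 l - m2 l) ^ 2) ^ 2) :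
    IsLeast (U '' {w | (∀ l, 0 ≤ w l) ∧ w ≠ 0})
      (8 / ∑ l, (m1 l - m2 l) ^ 4 / (s1 l + s2 l) ^ 2) ∧
    ∀ w : Fin d → ℝ, (∀ l, 0 ≤ w l) → w ≠ 0 →
      (U w = 8 / ∑ l, (m1 l - m2 l) ^ 4 / (s1 l + s2 l) ^ 2 ↔
        ∃ c > (0 : ℝ), ∀ l, w l = c * |m1 l - m2 l| / (s1 l + s2 l)) := by
  have hne : Nonempty (Fin d) := ⟨⟨0, hd⟩⟩
  have hb : ∀ l, (0:ℝ) < (s1 l + s2 l) ^ 2 := fun l => pow_pos (hs l) 2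
  have ha : ∀ l, (0:ℝ) < (m1 l - m2 l) ^ 2 := fun l =>
    lt_of_le_of_ne (sq_nonneg _) (Ne.symm (pow_ne_zero 2 (sub_ne_zero.mpr (hm l))))
  have hSrw : (∑ l, (m1 l - m2 l) ^ 4 / (s1 l + s2 l) ^ 2)
      = ∑ l, ((m1 l - m2 l) ^ 2) ^ 2 / (s1 l + s2 l) ^ 2 :=
    Finset.sum_congr rfl fun l _ => by ring_nf
  have hS : 0 < ∑ l, ((m1 l - m2 l) ^ 2) ^ 2 / (s1 l + s2 l) ^ 2 :=
    Finset.sum_pos (fun l _ => div_pos (pow_pos (ha l) 2) (hb l)) Finset.univ_nonempty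
  set S := ∑ l, ((m1 l - m2 l) ^ 2) ^ 2 / (s1 l + s2 l) ^ 2 with hSdef
  have hPpos : ∀ w : Fin d → ℝ, (∀ l, 0 ≤ w l) → w ≠ 0 →
      0 < ∑ l, w l ^ 2 * (m1 l - m2 l) ^ 2 := by
    intro w hw0 hwne
    obtain ⟨l0, hl0⟩ := Function.ne_iff.mp hwne
    refine Finset.sum_pos' (fun l _ => mul_nonneg (sq_nonneg _) (ha l).le)
      ⟨l0, Finset.mem_univ _, ?_⟩
    have hwl0 : w l0 ≠ 0 := hl0
    exact mul_pos (lt_of_le_of_ne (sq_nonneg _) (Ne.symm (pow_ne_zero 2 hwl0))) (ha l0)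
  -- key facts from quad_aux, beta reduced and with w^4 form
  have hkey : ∀ w : Fin d → ℝ,
      (∑ l, w l ^ 2 * (m1 l - m2 l) ^ 2) ^ 2 ≤ (∑ l, w l ^ 4 * (s1 l + s2 l) ^ 2) * S ∧
      ((∑ l, w l ^ 2 * (m1 l - m2 l) ^ 2) ^ 2
          = (∑ l, w l ^ 4 * (s1 l + s2 l) ^ 2) * S ↔
        ∀ l, w l ^ 2 = ((∑ l, w l ^ 2 * (m1 l - m2 l) ^ 2) / S)
          * (m1 l - m2 l) ^ 2 / (s1 l + s2 l) ^ 2) := by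
    intro w
    have h := quad_aux (fun l => (m1 l - m2 l) ^ 2) (fun l => (s1 l + s2 l) ^ 2)
      (fun l => w l ^ 2) hb (by exact hS)
    have hQrw : (∑ l, (w l ^ 2) ^ 2 * (s1 l + s2 l) ^ 2)
        = ∑ l, w l ^ 4 * (s1 l + s2 l) ^ 2 :=
      Finset.sum_congr rfl fun l _ => by ring
    rw [hQrw] at h
    exact h
  have hge : ∀ w : Fin d → ℝ, (∀ l, 0 ≤ w l) → w ≠ 0 → 8 / S ≤ U w := by
    intro w hw0 hwne
    have hP := hPpos w hw0 hwne
    have hle := (hkey w).1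
    rw [hU w]
    rw [div_le_div_iff₀ hS (pow_pos hP 2)]
    nlinarith [hle]
  have hiff : ∀ w : Fin d → ℝ, (∀ l, 0 ≤ w l) → w ≠ 0 →
      (U w = 8 / S ↔ ∃ c > (0:ℝ), ∀ l, w l = c * |m1 l - m2 l| / (s1 l + s2 l)) := by
    intro w hw0 hwne
    have hP := hPpos w hw0 hwne
    have heqiff := (hkey w).2
    constructor
    · intro h
      rw [hU w] at h
      have hPQ : (∑ l, w l ^ 2 * (m1 l - m2 l) ^ 2) ^ 2
          = (∑ l, w l ^ 4 * (s1 l + s2 l) ^ 2) * S := by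
        have := (div_eq_div_iff (pow_pos hP 2).ne' hS.ne').mp h
        nlinarith [this]
      have hx := heqiff.mp hPQ
      have htpos : 0 < (∑ l, w l ^ 2 * (m1 l - m2 l) ^ 2) / S := div_pos hP hS
      refine ⟨Real.sqrt ((∑ l, w l ^ 2 * (m1 l - m2 l) ^ 2) / S),
        Real.sqrt_pos.mpr htpos, fun l => ?_⟩
      have hr : (Real.sqrt ((∑ l, w l ^ 2 * (m1 l - m2 l) ^ 2) / S)
            * |m1 l - m2 l| / (s1 l + s2 l)) ^ 2
          = ((∑ l, w l ^ 2 * (m1 l - m2 l) ^ 2) / S)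
            * (m1 l - m2 l) ^ 2 / (s1 l + s2 l) ^ 2 := by
        rw [div_pow, mul_pow, Real.sq_sqrt htpos.le, sq_abs]
      have hrpos : 0 ≤ Real.sqrt ((∑ l, w l ^ 2 * (m1 l - m2 l) ^ 2) / S)
          * |m1 l - m2 l| / (s1 l + s2 l) :=
        div_nonneg (mul_nonneg (Real.sqrt_nonneg _) (abs_nonneg _)) (hs l).le
      have habs : |w l| = |Real.sqrt ((∑ l, w l ^ 2 * (m1 l - m2 l) ^ 2) / S)
          * |m1 l - m2 l| / (s1 l + s2 l)| := by
        rw [← Real.sqrt_sq_eq_abs, ← Real.sqrt_sq_eq_abs, hx l, hr]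
      rwa [abs_of_nonneg (hw0 l), abs_of_nonneg hrpos] at habs
    · rintro ⟨c, hc, hwc⟩
      have hPc : (∑ l, w l ^ 2 * (m1 l - m2 l) ^ 2) = c ^ 2 * S := by
        rw [hSdef, Finset.mul_sum]
        refine Finset.sum_congr rfl fun l _ => ?_
        rw [hwc l, div_pow, mul_pow, sq_abs]
        have hsl := (hs l).ne'
        field_simp
      have hQc : (∑ l, w l ^ 4 * (s1 l + s2 l) ^ 2) = c ^ 4 * S := by
        rw [hSdef, Finset.mul_sum]
        refine Finset.sum_congr rfl fun l _ => ?_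
        rw [hwc l, div_pow, mul_pow]
        have hab : |m1 l - m2 l| ^ 4 = ((m1 l - m2 l) ^ 2) ^ 2 := by
          rw [show (4:ℕ) = 2 * 2 from rfl, pow_mul, sq_abs]
        rw [hab]
        have hsl := (hs l).ne'
        field_simp
      rw [hU w, hPc, hQc]
      field_simp
  rw [hSrw]
  constructor
  · constructor
    · refine ⟨fun l => |m1 l - m2 l| / (s1 l + s2 l), ⟨?_, ?_⟩, ?_⟩
      · exact fun l => div_nonneg (abs_nonneg _) (hs l).le
      · intro h
        have h0 := congrFun h ⟨0, hd⟩
        have : (0:ℝ) < |m1 ⟨0, hd⟩ - m2 ⟨0, hd⟩| / (s1 ⟨0, hd⟩ + s2 ⟨0, hd⟩) :=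
          div_pos (abs_pos.mpr (sub_ne_zero.mpr (hm _))) (hs _)
        rw [h0] at this
        exact lt_irrefl _ this
      · refine (hiff _ (fun l => div_nonneg (abs_nonneg _) (hs l).le) ?_).mpr
          ⟨1, one_pos, fun l => by rw [one_mul]⟩
        intro h
        have h0 := congrFun h ⟨0, hd⟩
        have : (0:ℝ) < |m1 ⟨0, hd⟩ - m2 ⟨0, hd⟩| / (s1 ⟨0, hd⟩ + s2 ⟨0, hd⟩) :=
          div_pos (abs_pos.mpr (sub_ne_zero.mpr (hm _))) (hs _)
        rw [h0] at this
        exact lt_irrefl _ this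
    · rintro y ⟨w, ⟨hw0, hwne⟩, rfl⟩
      exact hge w hw0 hwne
  · exact hiff
end

section
/- For every real k > 0 and every λ > 0, φ_k is twice differentiable at λ with second derivative φ_k''(λ) = k·((k+1) − (2λ+1)·log(1 + 1/λ)) / ((λ² + λ)²·(log(1 + 1/λ))^{k+2}). In particular, φ_k''(λ) < 0 if and only if (2λ+1)·log(1 + 1/λ) > k + 1. -/
/-- The paper's channel-wise feature transformation (Eq. (1)). -/
noncomputable def phi (k : ℝ) (l : ℝ) : ℝ :=
  if 0 < l then 1 / (Real.log (1 / l + 1)) ^ k else 0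

lemma log_pos_aux {x : ℝ} (hx : 0 < x) : 0 < Real.log (1 + 1 / x) :=
  Real.log_pos (by nlinarith [one_div_pos.mpr hx])

lemma hasDerivAt_g {x : ℝ} (hx : 0 < x) :
    HasDerivAt (fun y : ℝ => Real.log (1 + 1 / y)) (-(1 / (x ^ 2 + x))) x := by
  have h1 : HasDerivAt (fun y : ℝ => 1 + 1 / y) (-(1 / x ^ 2)) x := by
    simpa [one_div] using ((hasDerivAt_inv hx.ne').const_add 1)
  have hne : (1 : ℝ) + 1 / x ≠ 0 := by positivity
  have h2 := h1.log hne
  convert h2 using 1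
  field_simp

lemma hasDerivAt_phi {k x : ℝ} (hx : 0 < x) :
    HasDerivAt (phi k) (k / ((x ^ 2 + x) * (Real.log (1 + 1 / x)) ^ (k + 1))) x := by
  have hG : 0 < Real.log (1 + 1 / x) := log_pos_aux hx
  have hd := (hasDerivAt_g hx).rpow_const (p := -k) (Or.inl hG.ne')
  have heq : (fun y : ℝ => Real.log (1 + 1 / y) ^ (-k)) =ᶠ[nhds x] phi k := by
    filter_upwards [isOpen_Ioi.mem_nhds (show x ∈ Set.Ioi 0 from hx)] with y hy
    have hGy : 0 < Real.log (1 + 1 / y) := log_pos_aux hy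
    simp only [phi, if_pos (show 0 < y from hy)]
    rw [add_comm (1 : ℝ) (1 / y),
      Real.rpow_neg (by rw [add_comm]; exact hGy.le)]
    exact (one_div _).symm
  have h := hd.congr_of_eventuallyEq heq.symm
  refine h.congr_deriv (Eq.symm ?_)
  have hA : (0 : ℝ) < x ^ 2 + x := by positivity
  have e1 : Real.log (1 + 1 / x) ^ (-k - 1) = (Real.log (1 + 1 / x) ^ (k + 1))⁻¹ := by
    rw [show (-k - 1 : ℝ) = -(k + 1) by ring, Real.rpow_neg hG.le]
  rw [e1]
  have hGk : (0 : ℝ) < Real.log (1 + 1 / x) ^ (k + 1) := Real.rpow_pos_of_pos hG _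
  field_simp

lemma alg_aux (k x G Gk A : ℝ) (hG : G ≠ 0) (hGk : Gk ≠ 0) (hA : A ≠ 0) :
    k * ((k + 1) - (2 * x + 1) * G) / (A ^ 2 * (Gk * G * G))
      = k * (-((2 * x + 1) * (Gk * G) + A * ((k + 1) * Gk * (-(1 / A)))) / (A * (Gk * G)) ^ 2) := by
  field_simp
  ring

/-- For every `k > 0` and `λ > 0`, `φ_k` is twice differentiable at `λ` with second derivative
`k ((k+1) - (2λ+1) log(1 + 1/λ)) / ((λ² + λ)² (log(1 + 1/λ))^(k+2))`; in particular
`φ_k''(λ) < 0` if and only if `(2λ+1) log(1 + 1/λ) > k + 1`. -/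
theorem stmt12 (k : ℝ) (hk : 0 < k) (l : ℝ) (hl : 0 < l) :
    HasDerivAt (deriv (phi k))
      (k * ((k + 1) - (2 * l + 1) * Real.log (1 + 1 / l)) /
        ((l ^ 2 + l) ^ 2 * (Real.log (1 + 1 / l)) ^ (k + 2))) l ∧
    (k * ((k + 1) - (2 * l + 1) * Real.log (1 + 1 / l)) /
        ((l ^ 2 + l) ^ 2 * (Real.log (1 + 1 / l)) ^ (k + 2)) < 0 ↔
      k + 1 < (2 * l + 1) * Real.log (1 + 1 / l)) := by
  have hG : 0 < Real.log (1 + 1 / l) := log_pos_aux hl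
  have hA : (0 : ℝ) < l ^ 2 + l := by positivity
  constructor
  · have hu : HasDerivAt (fun y : ℝ => y ^ 2 + y) (2 * l + 1) l := by
      exact ((hasDerivAt_pow 2 l).add (hasDerivAt_id' l)).congr_deriv (by push_cast; ring)
    have hv : HasDerivAt (fun y : ℝ => Real.log (1 + 1 / y) ^ (k + 1))
        ((k + 1) * Real.log (1 + 1 / l) ^ k * (-(1 / (l ^ 2 + l)))) l := by
      have h := (hasDerivAt_g hl).rpow_const (p := k + 1) (Or.inl hG.ne')
      convert h using 1
      rw [show k + 1 - 1 = k by ring]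
      ring
    have huv := hu.mul hv
    have hGk1 : (0 : ℝ) < Real.log (1 + 1 / l) ^ (k + 1) := Real.rpow_pos_of_pos hG _
    have hne : (l ^ 2 + l) * Real.log (1 + 1 / l) ^ (k + 1) ≠ 0 := by positivity
    have hfull := (huv.inv hne).const_mul k
    have key : HasDerivAt (fun y : ℝ => k / ((y ^ 2 + y) * Real.log (1 + 1 / y) ^ (k + 1)))
        (k * ((k + 1) - (2 * l + 1) * Real.log (1 + 1 / l)) /
          ((l ^ 2 + l) ^ 2 * Real.log (1 + 1 / l) ^ (k + 2))) l := by
      have hfe : (fun y : ℝ => k / ((y ^ 2 + y) * Real.log (1 + 1 / y) ^ (k + 1)))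
          = fun y : ℝ => k * ((y ^ 2 + y) * Real.log (1 + 1 / y) ^ (k + 1))⁻¹ := by
        funext y; rw [div_eq_mul_inv]
      rw [hfe]
      refine hfull.congr_deriv (Eq.symm ?_)
      simp only [Pi.mul_apply]
      have e1 : Real.log (1 + 1 / l) ^ (k + 1) = Real.log (1 + 1 / l) ^ k * Real.log (1 + 1 / l) := by
        rw [Real.rpow_add hG, Real.rpow_one]
      have e2 : Real.log (1 + 1 / l) ^ (k + 2)
          = Real.log (1 + 1 / l) ^ k * Real.log (1 + 1 / l) * Real.log (1 + 1 / l) := by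
        rw [show (k + 2 : ℝ) = (k + 1) + 1 by ring, Real.rpow_add hG, Real.rpow_one, e1]
      have hGk : (0 : ℝ) < Real.log (1 + 1 / l) ^ k := Real.rpow_pos_of_pos hG _
      rw [e2, e1]
      exact alg_aux k l _ _ _ hG.ne' hGk.ne' hA.ne'
    refine key.congr_of_eventuallyEq ?_
    filter_upwards [isOpen_Ioi.mem_nhds (show l ∈ Set.Ioi 0 from hl)] with y hy
    exact (hasDerivAt_phi hy).deriv
  · have hden : (0 : ℝ) < (l ^ 2 + l) ^ 2 * Real.log (1 + 1 / l) ^ (k + 2) := by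
      have h2 := Real.rpow_pos_of_pos hG (k + 2)
      positivity
    rw [div_neg_iff]
    constructor
    · rintro (⟨h1, h2⟩ | ⟨h1, h2⟩)
      · exact absurd h2 (not_lt.2 hden.le)
      · nlinarith
    · intro h
      right
      exact ⟨by nlinarith, hden⟩
end

section
/- The function ψ(λ) = (2λ + 1)·log(1 + 1/λ) is strictly decreasing on (0, ∞); moreover lim_{λ→0⁺} ψ(λ) = +∞ and lim_{λ→∞} ψ(λ) = 2, so ψ(λ) > 2 for every λ > 0. (Equivalently, for every x > 0 one has x(2 + x)/(1 + x) > 2·log(1 + x), which upon substituting x = 1/λ yields that ψ'(λ) = 2·log(1 + 1/λ) − (2λ + 1)/(λ² + λ) < 0 for all λ > 0.) -/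
open Filter

lemma key_dg (x : ℝ) (hx : -1 < x) :
    HasDerivAt (fun x : ℝ => x * (2 + x) / (1 + x) - 2 * Real.log (1 + x))
      (x ^ 2 / (1 + x) ^ 2) x := by
  have h1 : (1 : ℝ) + x ≠ 0 := by linarith
  have hv : HasDerivAt (fun x : ℝ => 1 + x) 1 x := by
    simpa using (hasDerivAt_id x).const_add 1
  have hu : HasDerivAt (fun x : ℝ => x * (2 + x)) (1 * (2 + x) + x * 1) x :=
    (hasDerivAt_id x).mul ((hasDerivAt_id x).const_add 2)
  have hq := hu.div hv h1
  have hl : HasDerivAt (fun x : ℝ => Real.log (1 + x)) ((1 + x)⁻¹ * 1) x :=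
    (Real.hasDerivAt_log h1).comp x hv
  have := hq.sub (hl.const_mul 2)
  refine HasDerivAt.congr_deriv this ?_
  field_simp
  ring

lemma key_ineq (x : ℝ) (hx : 0 < x) :
    2 * Real.log (1 + x) < x * (2 + x) / (1 + x) := by
  set g : ℝ → ℝ := fun x => x * (2 + x) / (1 + x) - 2 * Real.log (1 + x) with hg
  have hmono : StrictMonoOn g (Set.Ici 0) := by
    apply strictMonoOn_of_deriv_pos (convex_Ici 0)
    · intro y hy
      exact (key_dg y (by simp at hy; linarith)).differentiableAt.continuousAt.continuousWithinAt
    · intro y hy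
      rw [interior_Ici] at hy
      rw [(key_dg y (by simp at hy; linarith)).deriv]
      have : (0:ℝ) < y := hy
      positivity
  have h0 : g 0 = 0 := by simp [hg]
  have := hmono (Set.self_mem_Ici) (Set.mem_Ici.2 hx.le) hx
  rw [h0] at this
  simp only [hg] at this
  linarith

lemma psi_deriv (l : ℝ) (hl : 0 < l) :
    HasDerivAt (fun l : ℝ => (2 * l + 1) * Real.log (1 + 1 / l))
      (2 * Real.log (1 + 1 / l) - (2 * l + 1) / (l ^ 2 + l)) l := by
  have h1 : (1 : ℝ) + 1 / l ≠ 0 := by positivity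
  have hv : HasDerivAt (fun l : ℝ => 1 + 1 / l) (-(l ^ 2)⁻¹) l := by
    simpa [one_div] using (hasDerivAt_inv hl.ne').const_add 1
  have hlog : HasDerivAt (fun l : ℝ => Real.log (1 + 1 / l))
      ((1 + 1 / l)⁻¹ * -(l ^ 2)⁻¹) l := by have := (Real.hasDerivAt_log h1).comp l hv; exact this
  have hu : HasDerivAt (fun l : ℝ => 2 * l + 1) 2 l := by
    simpa using ((hasDerivAt_id l).const_mul 2).add_const 1
  have := hu.mul hlog
  refine HasDerivAt.congr_deriv this ?_
  have hl2 : l ^ 2 + l ≠ 0 := by positivity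
  field_simp
  ring

lemma psi_deriv_neg (l : ℝ) (hl : 0 < l) :
    2 * Real.log (1 + 1 / l) - (2 * l + 1) / (l ^ 2 + l) < 0 := by
  have hx : (0:ℝ) < 1 / l := by positivity
  have := key_ineq (1 / l) hx
  have heq : (1 / l) * (2 + 1 / l) / (1 + 1 / l) = (2 * l + 1) / (l ^ 2 + l) := by
    have hl2 : l ^ 2 + l ≠ 0 := by positivity
    field_simp
  rw [heq] at this
  linarith

/-- The function `ψ(λ) = (2λ+1) log(1 + 1/λ)` is strictly decreasing on `(0, ∞)`, tends to
`+∞` as `λ → 0⁺` and to `2` as `λ → ∞`, hence `ψ(λ) > 2` for every `λ > 0`; equivalently, for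
every `x > 0` one has `x(2+x)/(1+x) > 2 log(1+x)`, which yields
`ψ'(λ) = 2 log(1 + 1/λ) - (2λ+1)/(λ² + λ) < 0` for all `λ > 0`. -/
theorem stmt14 (ψ : ℝ → ℝ) (hψ : ∀ l, ψ l = (2 * l + 1) * Real.log (1 + 1 / l)) :
    StrictAntiOn ψ (Set.Ioi 0) ∧
    Tendsto ψ (nhdsWithin 0 (Set.Ioi 0)) atTop ∧
    Tendsto ψ atTop (nhds 2) ∧
    (∀ l : ℝ, 0 < l → 2 < ψ l) ∧
    (∀ x : ℝ, 0 < x → 2 * Real.log (1 + x) < x * (2 + x) / (1 + x)) ∧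
    (∀ l : ℝ, 0 < l →
      HasDerivAt ψ (2 * Real.log (1 + 1 / l) - (2 * l + 1) / (l ^ 2 + l)) l ∧
      2 * Real.log (1 + 1 / l) - (2 * l + 1) / (l ^ 2 + l) < 0) := by
  have hψeq : ψ = fun l : ℝ => (2 * l + 1) * Real.log (1 + 1 / l) := funext hψ
  subst hψeq
  have hderiv : ∀ l : ℝ, 0 < l →
      HasDerivAt (fun l : ℝ => (2 * l + 1) * Real.log (1 + 1 / l))
        (2 * Real.log (1 + 1 / l) - (2 * l + 1) / (l ^ 2 + l)) l := psi_deriv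
  have hanti : StrictAntiOn (fun l : ℝ => (2 * l + 1) * Real.log (1 + 1 / l)) (Set.Ioi 0) := by
    apply strictAntiOn_of_deriv_neg (convex_Ioi 0)
    · intro y hy
      exact (hderiv y hy).differentiableAt.continuousAt.continuousWithinAt
    · intro y hy
      rw [interior_Ioi] at hy
      rw [(hderiv y hy).deriv]
      exact psi_deriv_neg y hy
  have htop : Tendsto (fun l : ℝ => (2 * l + 1) * Real.log (1 + 1 / l))
      (nhdsWithin 0 (Set.Ioi 0)) atTop := by
    have h1 : Tendsto (fun l : ℝ => 2 * l + 1) (nhdsWithin 0 (Set.Ioi 0)) (nhds 1) := by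
      have : Tendsto (fun l : ℝ => 2 * l + 1) (nhds 0) (nhds (2 * 0 + 1)) :=
        (continuous_const.mul continuous_id).add continuous_const |>.tendsto 0
      simpa using this.mono_left nhdsWithin_le_nhds
    have h2 : Tendsto (fun l : ℝ => Real.log (1 + 1 / l)) (nhdsWithin 0 (Set.Ioi 0)) atTop := by
      apply Real.tendsto_log_atTop.comp
      exact tendsto_atTop_add_const_left _ 1 (by
        show Tendsto (fun l : ℝ => 1 / l) _ _
        simp only [one_div]
        exact tendsto_inv_nhdsGT_zero)
    exact h1.pos_mul_atTop one_pos h2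
  have h2lim : Tendsto (fun l : ℝ => (2 * l + 1) * Real.log (1 + 1 / l)) atTop (nhds 2) := by
    have hA : Tendsto (fun l : ℝ => l * Real.log (1 + 1 / l)) atTop (nhds 1) := by
      simpa using Real.tendsto_mul_log_one_add_div_atTop 1
    have hB : Tendsto (fun l : ℝ => Real.log (1 + 1 / l)) atTop (nhds 0) := by
      have h1 : Tendsto (fun l : ℝ => 1 + 1 / l) atTop (nhds 1) := by
        simpa [one_div] using tendsto_inv_atTop_zero.const_add (1:ℝ)
      have := (Real.continuousAt_log one_ne_zero).tendsto.comp h1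
      simpa [Function.comp_def] using this
    have := (hA.const_mul 2).add hB
    simp only [mul_one, add_zero] at this
    convert this using 2 with l
    ring
  have hgt2 : ∀ l : ℝ, 0 < l → 2 < (2 * l + 1) * Real.log (1 + 1 / l) := by
    intro l hl
    have hge : 2 ≤ (2 * (l + 1) + 1) * Real.log (1 + 1 / (l + 1)) := by
      apply le_of_tendsto h2lim
      filter_upwards [eventually_ge_atTop (l + 2)] with m hm
      exact le_of_lt (hanti (Set.mem_Ioi.2 (by linarith)) (Set.mem_Ioi.2 (by linarith)) (by linarith))
    have hlt : (2 * (l + 1) + 1) * Real.log (1 + 1 / (l + 1)) <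
        (2 * l + 1) * Real.log (1 + 1 / l) :=
      hanti (show l ∈ Set.Ioi 0 from hl)
        (show l + 1 ∈ Set.Ioi 0 from Set.mem_Ioi.2 (by linarith)) (by linarith)
    linarith
  exact ⟨hanti, htop, h2lim, hgt2, key_ineq, fun l hl => ⟨hderiv l hl, psi_deriv_neg l hl⟩⟩
end

section
/- For every real k > 1, there exists a unique t > 0 such that (2t + 1)·log(1 + 1/t) = k + 1; moreover the second derivative of φ_k satisfies φ_k''(λ) < 0 for all λ ∈ (0, t) and φ_k''(λ) > 0 for all λ ∈ (t, ∞). -/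
open Real Filter Set

namespace Stmt16Aux

noncomputable def L (l : ℝ) : ℝ := Real.log (1 + l⁻¹)

noncomputable def psi (l : ℝ) : ℝ := (2 * l + 1) * L l

lemma L_pos {l : ℝ} (hl : 0 < l) : 0 < L l := by
  have : (0:ℝ) < l⁻¹ := by positivity
  exact Real.log_pos (by linarith)

lemma denom_pos {l : ℝ} (hl : 0 < l) : 0 < l ^ 2 + l := by positivity

lemma hasDerivAt_L {l : ℝ} (hl : 0 < l) : HasDerivAt L (-(l ^ 2 + l)⁻¹) l := by
  have h1 : HasDerivAt (fun x : ℝ => 1 + x⁻¹) (-(l ^ 2)⁻¹) l := by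
    simpa using (hasDerivAt_inv hl.ne').const_add 1
  have hpos : (0:ℝ) < 1 + l⁻¹ := by positivity
  have h2 := h1.log hpos.ne'
  show HasDerivAt (fun y => Real.log (1 + y⁻¹)) _ l
  convert h2 using 1
  field_simp

lemma key_ineq {l : ℝ} (hl : 0 < l) : 2 * L l < (2 * l + 1) * (l ^ 2 + l)⁻¹ := by
  have hy : (0:ℝ) < 1 + l⁻¹ := by positivity
  have hLpos := L_pos hl
  have h1 : L l < Real.sinh (L l) := Real.self_lt_sinh_iff.mpr hLpos
  rw [L, Real.sinh_log hy] at h1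
  have h2 : ((1 + l⁻¹) - (1 + l⁻¹)⁻¹) / 2 = (2 * l + 1) * (l ^ 2 + l)⁻¹ / 2 := by
    rw [div_eq_div_iff (by norm_num) (by norm_num)]
    field_simp
    ring
  rw [h2] at h1
  unfold L at *
  linarith

lemma hasDerivAt_psi {l : ℝ} (hl : 0 < l) :
    HasDerivAt psi (2 * L l + (2 * l + 1) * (-(l ^ 2 + l)⁻¹)) l := by
  have h1 : HasDerivAt (fun x : ℝ => 2 * x + 1) 2 l := by
    simpa using ((hasDerivAt_id l).const_mul 2).add_const 1
  exact h1.mul (hasDerivAt_L hl)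

lemma psi_anti : StrictAntiOn psi (Ioi 0) := by
  apply strictAntiOn_of_deriv_neg (convex_Ioi 0)
  · intro l hl
    exact (hasDerivAt_psi hl).continuousAt.continuousWithinAt
  · intro l hl
    rw [interior_Ioi] at hl
    rw [(hasDerivAt_psi hl).deriv]
    have := key_ineq hl
    nlinarith [this]

lemma exists_root {k : ℝ} (hk : 1 < k) : ∃ t : ℝ, 0 < t ∧ psi t = k + 1 := by
  set a : ℝ := (Real.exp (k + 1))⁻¹ with ha_def
  set b : ℝ := 2 / (k - 1) with hb_def
  have hexp : 0 < Real.exp (k + 1) := Real.exp_pos _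
  have ha : 0 < a := by positivity
  have hb : 0 < b := by rw [hb_def]; apply div_pos <;> linarith
  have hab : a ≤ b := by
    rw [ha_def, hb_def, inv_eq_one_div, div_le_div_iff₀ hexp (by linarith)]
    nlinarith [Real.add_one_le_exp (k + 1)]
  -- psi a > k + 1
  have hpa : k + 1 ≤ psi a := by
    have h1 : L a = Real.log (1 + Real.exp (k + 1)) := by
      rw [L, ha_def, inv_inv]
    have h2 : k + 1 < L a := by
      rw [h1]
      calc k + 1 = Real.log (Real.exp (k + 1)) := (Real.log_exp _).symm
        _ < Real.log (1 + Real.exp (k + 1)) := by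
            apply Real.log_lt_log hexp; linarith
    have h3 : (1:ℝ) ≤ 2 * a + 1 := by nlinarith
    have hLpos := L_pos ha
    calc k + 1 ≤ L a := h2.le
      _ = 1 * L a := (one_mul _).symm
      _ ≤ (2 * a + 1) * L a := by nlinarith
  -- psi b < k + 1
  have hpb : psi b ≤ k + 1 := by
    have h1 : L b ≤ b⁻¹ := by
      have := Real.log_le_sub_one_of_pos (show (0:ℝ) < 1 + b⁻¹ by positivity)
      simpa [L] using this
    have h2 : psi b ≤ (2 * b + 1) * b⁻¹ := by
      have h3 : (0:ℝ) < 2 * b + 1 := by linarith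
      exact mul_le_mul_of_nonneg_left h1 h3.le
    have h4 : (2 * b + 1) * b⁻¹ = 2 + b⁻¹ := by field_simp
    have h5 : b⁻¹ = (k - 1) / 2 := by rw [hb_def]; field_simp
    rw [h4, h5] at h2
    linarith
  have hcont : ContinuousOn psi (Icc a b) := by
    intro x hx
    have hx0 : 0 < x := lt_of_lt_of_le ha hx.1
    exact (hasDerivAt_psi hx0).continuousAt.continuousWithinAt
  have hmem : (k + 1) ∈ Icc (psi b) (psi a) := ⟨hpb, hpa⟩
  obtain ⟨t, ht, hpt⟩ := intermediate_value_Icc' hab hcont hmem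
  exact ⟨t, lt_of_lt_of_le ha ht.1, hpt⟩

lemma phi_eventually {k l : ℝ} (hl : 0 < l) :
    phi k =ᶠ[nhds l] fun x => L x ^ (-k) := by
  filter_upwards [Ioi_mem_nhds hl] with x hx
  have hLx := L_pos hx
  simp only [phi, if_pos hx]
  rw [show (1 / x + 1) = 1 + x⁻¹ by rw [one_div]; ring]
  rw [Real.rpow_neg hLx.le, one_div, L]
  have hx' : (0:ℝ) < x := hx
  rw [if_pos hx']

lemma deriv_phi {k l : ℝ} (hl : 0 < l) :
    deriv (phi k) l = -(l ^ 2 + l)⁻¹ * (-k) * L l ^ (-k - 1) := by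
  have hd : HasDerivAt (fun x => L x ^ (-k)) (-(l ^ 2 + l)⁻¹ * (-k) * L l ^ (-k - 1)) l :=
    (hasDerivAt_L hl).rpow_const (Or.inl (L_pos hl).ne')
  rw [(phi_eventually (k := k) hl).deriv_eq, hd.deriv]

lemma hasDerivAt_F1 {k l : ℝ} (hk : 1 < k) (hl : 0 < l) :
    HasDerivAt (fun x => -(x ^ 2 + x)⁻¹ * (-k) * L x ^ (-k - 1))
      (k * ((l ^ 2 + l)⁻¹) ^ 2 * L l ^ (-k - 2) * ((k + 1) - (2 * l + 1) * L l)) l := by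
  have hL := L_pos hl
  have hD := denom_pos hl
  have hA : HasDerivAt (fun x => L x ^ (-k - 1))
      (-(l ^ 2 + l)⁻¹ * (-k - 1) * L l ^ (-k - 1 - 1)) l :=
    (hasDerivAt_L hl).rpow_const (Or.inl hL.ne')
  have hB0 : HasDerivAt (fun x : ℝ => x ^ 2 + x) (2 * l + 1) l := by
    have := ((hasDerivAt_pow 2 l).add (hasDerivAt_id l))
    refine this.congr_deriv ?_
    push_cast
    ring
  have hB : HasDerivAt (fun x : ℝ => -(x ^ 2 + x)⁻¹ * (-k))
      (-(-(2 * l + 1) / (l ^ 2 + l) ^ 2) * (-k)) l :=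
    ((hB0.inv hD.ne').neg).mul_const (-k)
  have h := hB.mul hA
  refine h.congr_deriv ?_
  have hsplit : L l ^ (-k - 1) = L l ^ (-k - 2) * L l := by
    rw [show (-k - 1 : ℝ) = (-k - 2) + 1 by ring, Real.rpow_add hL, Real.rpow_one]
  have he : (-k - 1 - 1 : ℝ) = -k - 2 := by ring
  rw [he, hsplit]
  have hinv : ((l ^ 2 + l) ^ 2)⁻¹ = ((l ^ 2 + l)⁻¹) ^ 2 := by
    rw [inv_pow]
  field_simp
  ring

lemma deriv2_phi {k l : ℝ} (hk : 1 < k) (hl : 0 < l) :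
    deriv (deriv (phi k)) l =
      k * ((l ^ 2 + l)⁻¹) ^ 2 * L l ^ (-k - 2) * ((k + 1) - psi l) := by
  have hev : deriv (phi k) =ᶠ[nhds l] fun x => -(x ^ 2 + x)⁻¹ * (-k) * L x ^ (-k - 1) := by
    filter_upwards [Ioi_mem_nhds hl] with x hx
    exact deriv_phi hx
  rw [hev.deriv_eq, (hasDerivAt_F1 hk hl).deriv, psi]

lemma deriv2_neg {k l : ℝ} (hk : 1 < k) (hl : 0 < l) (hpsi : k + 1 < psi l) :
    deriv (deriv (phi k)) l < 0 := by
  rw [deriv2_phi hk hl]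
  have h1 : 0 < k * ((l ^ 2 + l)⁻¹) ^ 2 * L l ^ (-k - 2) := by
    have := Real.rpow_pos_of_pos (L_pos hl) (-k - 2)
    have hD := denom_pos hl
    positivity
  have h2 : (k + 1) - psi l < 0 := by linarith
  exact mul_neg_of_pos_of_neg h1 h2

lemma deriv2_pos {k l : ℝ} (hk : 1 < k) (hl : 0 < l) (hpsi : psi l < k + 1) :
    0 < deriv (deriv (phi k)) l := by
  rw [deriv2_phi hk hl]
  have h1 : 0 < k * ((l ^ 2 + l)⁻¹) ^ 2 * L l ^ (-k - 2) := by
    have := Real.rpow_pos_of_pos (L_pos hl) (-k - 2)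
    have hD := denom_pos hl
    positivity
  have h2 : 0 < (k + 1) - psi l := by linarith
  exact mul_pos h1 h2

end Stmt16Aux

open Stmt16Aux in
/-- For every `k > 1` there is a unique `t > 0` with `(2t+1) log(1 + 1/t) = k + 1`; moreover
the second derivative of `φ_k` is negative on `(0, t)` and positive on `(t, ∞)`. -/
theorem stmt16 (k : ℝ) (hk : 1 < k) :
    ∃ t : ℝ, 0 < t ∧ (2 * t + 1) * Real.log (1 + 1 / t) = k + 1 ∧
      (∀ s : ℝ, 0 < s → (2 * s + 1) * Real.log (1 + 1 / s) = k + 1 → s = t) ∧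
      (∀ l : ℝ, 0 < l → l < t → deriv (deriv (phi k)) l < 0) ∧
      (∀ l : ℝ, t < l → 0 < deriv (deriv (phi k)) l) := by
  obtain ⟨t, ht, hpt⟩ := exists_root hk
  have hpsi_eq : ∀ s : ℝ, (2 * s + 1) * Real.log (1 + 1 / s) = psi s := by
    intro s; rw [psi, L, one_div]
  refine ⟨t, ht, ?_, ?_, ?_, ?_⟩
  · rw [hpsi_eq]; exact hpt
  · intro s hs hseq
    rw [hpsi_eq] at hseq
    exact psi_anti.injOn hs ht (by rw [hseq, hpt])
  · intro l hl hlt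
    apply deriv2_neg hk hl
    rw [← hpt]
    exact psi_anti hl ht hlt
  · intro l hl
    have hl0 : 0 < l := lt_trans ht hl
    apply deriv2_pos hk hl0
    rw [← hpt]
    exact psi_anti ht hl0 hl
end
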